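/- Under the setting of the MINIMAX-TR descent lemma, if λ ≤ 2√(ε/H_L), ‖s‖ ≤ √(ε/H_L), g + (H + (λH_L/2))s = 0, ‖∇P(x) − g‖ ≤ ε/12, ‖∇²P(x) − H‖ ≤ √(ε·H_L)/6, and P has H_L-Lipschitz Hessian, then ‖∇P(x+s)‖ ≤ (7/4)ε. -/

import Mathlib

set_option synthInstance.maxHeartbeats 400000
set_option maxHeartbeats 800000

open scoped RealInnerProductSpace

lemma taylor_grad {n : ℕ} (HL : ℝ)
    (gP : EuclideanSpace ℝ (Fin n) → EuclideanSpace ℝ (Fin n))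
    (hessP : EuclideanSpace ℝ (Fin n) → (EuclideanSpace ℝ (Fin n) →L[ℝ] EuclideanSpace ℝ (Fin n)))
    (hhess : ∀ x, HasFDerivAt gP (hessP x) x)
    (hlipHess : ∀ a b, ‖hessP a - hessP b‖ ≤ HL * ‖a - b‖)
    (x s : EuclideanSpace ℝ (Fin n)) :
    ‖gP (x + s) - gP x - hessP x s‖ ≤ HL / 2 * ‖s‖^2 := by
  set f : ℝ → EuclideanSpace ℝ (Fin n) := fun t => gP (x + t • s) - gP x - t • (hessP x s)
  set f' : ℝ → EuclideanSpace ℝ (Fin n) := fun t => hessP (x + t • s) s - hessP x s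
  have hderiv : ∀ t : ℝ, HasDerivAt f (f' t) t := by
    intro t
    have h1 : HasDerivAt (fun t : ℝ => x + t • s) s t := by
      simpa using (hasDerivAt_id t).smul_const s |>.const_add x
    have h2 : HasDerivAt (fun t : ℝ => gP (x + t • s)) (hessP (x + t • s) s) t :=
      (hhess (x + t • s)).comp_hasDerivAt t h1
    exact (h2.sub_const (gP x)).sub (by simpa using (hasDerivAt_id t).smul_const (hessP x s))
  have hB : ∀ t : ℝ, HasDerivAt (fun t => HL / 2 * ‖s‖^2 * t^2) (HL * ‖s‖^2 * t) t := by
    intro t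
    have := (hasDerivAt_pow 2 t).const_mul (HL / 2 * ‖s‖^2)
    refine this.congr_deriv ?_
    rw [show (2:ℕ) - 1 = 1 from rfl]; push_cast; ring
  have bound : ∀ t ∈ Set.Ico (0:ℝ) 1, ‖f' t‖ ≤ HL * ‖s‖^2 * t := by
    intro t ht
    have h1 : ‖f' t‖ ≤ ‖hessP (x + t • s) - hessP x‖ * ‖s‖ := by
      simpa [f'] using (hessP (x + t • s) - hessP x).le_opNorm s
    have h2 : ‖hessP (x + t • s) - hessP x‖ ≤ HL * (t * ‖s‖) := by
      have := hlipHess (x + t • s) x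
      simpa [norm_smul, abs_of_nonneg ht.1] using this
    calc ‖f' t‖ ≤ HL * (t * ‖s‖) * ‖s‖ :=
          h1.trans (mul_le_mul_of_nonneg_right h2 (norm_nonneg s))
      _ = HL * ‖s‖^2 * t := by ring
  have key := image_norm_le_of_norm_deriv_right_le_deriv_boundary
    (B := fun t => HL / 2 * ‖s‖^2 * t^2)
    (fun t _ => (hderiv t).continuousAt.continuousWithinAt)
    (fun t _ => (hderiv t).hasDerivWithinAt)
    (by simp [f]) hB bound (Set.right_mem_Icc.2 zero_le_one)
  simpa [f] using key

/-- In the MINIMAX-TR setting, if `λ ≤ 2√(ε/H_L)`, then `‖∇P(x+s)‖ ≤ (7/4)ε`. -/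
theorem stmt9 {n : ℕ} (ε HL lam : ℝ) (hε : 0 < ε) (hHL : 0 < HL)
    (P : EuclideanSpace ℝ (Fin n) → ℝ)
    (gP : EuclideanSpace ℝ (Fin n) → EuclideanSpace ℝ (Fin n))
    (hessP : EuclideanSpace ℝ (Fin n) → (EuclideanSpace ℝ (Fin n) →L[ℝ] EuclideanSpace ℝ (Fin n)))
    (hgrad : ∀ x, HasGradientAt P (gP x) x)
    (hhess : ∀ x, HasFDerivAt gP (hessP x) x)
    (hlipHess : ∀ a b, ‖hessP a - hessP b‖ ≤ HL * ‖a - b‖)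
    (x g s : EuclideanSpace ℝ (Fin n))
    (H : EuclideanSpace ℝ (Fin n) →L[ℝ] EuclideanSpace ℝ (Fin n)) (hsa : IsSelfAdjoint H)
    (hgerr : ‖gP x - g‖ ≤ ε / 12)
    (hHerr : ‖hessP x - H‖ ≤ Real.sqrt (ε * HL) / 6)
    (hkkt1 : g + (H + (lam * HL / 2) • ContinuousLinearMap.id ℝ (EuclideanSpace ℝ (Fin n))) s = 0)
    (hsnorm : ‖s‖ ≤ Real.sqrt (ε / HL))
    (hlam0 : 0 ≤ lam) (hlam : lam ≤ 2 * Real.sqrt (ε / HL)) :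
    ‖gP (x + s)‖ ≤ (7/4) * ε := by
  set r := Real.sqrt (ε / HL) with hr_def
  have hr0 : 0 ≤ r := Real.sqrt_nonneg _
  have hr2 : HL * r ^ 2 = ε := by
    rw [hr_def, Real.sq_sqrt (by positivity)]; field_simp
  have hss : Real.sqrt (ε * HL) * r = ε := by
    rw [hr_def, ← Real.sqrt_mul (by positivity),
      show ε * HL * (ε / HL) = ε ^ 2 by field_simp]
    exact Real.sqrt_sq hε.le
  -- KKT rearranged
  have hkkt2 : g + H s = -((lam * HL / 2) • s) := by
    have := hkkt1
    simp only [ContinuousLinearMap.add_apply, ContinuousLinearMap.smul_apply,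
      ContinuousLinearMap.id_apply] at this
    rw [← add_assoc] at this
    exact eq_neg_of_add_eq_zero_left this
  have hdecomp : gP (x + s) =
      (gP (x + s) - gP x - hessP x s) + (gP x - g) + ((hessP x - H) s) + (g + H s) := by
    simp only [ContinuousLinearMap.sub_apply]
    abel
  have hA := taylor_grad HL gP hessP hhess hlipHess x s
  have hC : ‖(hessP x - H) s‖ ≤ Real.sqrt (ε * HL) / 6 * r := by
    calc ‖(hessP x - H) s‖ ≤ ‖hessP x - H‖ * ‖s‖ := (hessP x - H).le_opNorm s
      _ ≤ Real.sqrt (ε * HL) / 6 * r :=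
        mul_le_mul hHerr hsnorm (norm_nonneg s) (by positivity)
  have hD : ‖g + H s‖ ≤ (2 * r) * HL / 2 * r := by
    rw [hkkt2, norm_neg, norm_smul, Real.norm_eq_abs,
      abs_of_nonneg (by positivity)]
    apply mul_le_mul (by nlinarith) hsnorm (norm_nonneg s) (by positivity)
  have hs2 : ‖s‖ ^ 2 ≤ r ^ 2 := by
    apply pow_le_pow_left₀ (norm_nonneg s) hsnorm
  calc ‖gP (x + s)‖ ≤ ‖gP (x + s) - gP x - hessP x s‖ + ‖gP x - g‖
        + ‖(hessP x - H) s‖ + ‖g + H s‖ := by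
        conv_lhs => rw [hdecomp]
        refine (norm_add_le _ _).trans ?_
        have := norm_add₃_le (a := gP (x + s) - gP x - hessP x s) (b := gP x - g)
          (c := (hessP x - H) s)
        linarith
      _ ≤ HL / 2 * ‖s‖ ^ 2 + ε / 12 + Real.sqrt (ε * HL) / 6 * r + (2 * r) * HL / 2 * r := by
        gcongr
      _ ≤ (7/4) * ε := by nlinarith
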